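/- arXiv:1608.03349 — 3 statements merged into one kernel-verified Lean document; each statement's English description precedes it below -/
import Mathlib

section
/- Let Δ > 0, ω₀ > 0, k̄ > 0, τ̄ > 0, β ∈ ℝ, and suppose iτ̄β is a root of the characteristic equation λ = −τ̄(iω₀ + Δ) + τ̄(k̄/2)e^{−λ}. Then the sign of Re[ (k̄τ̄/2)·e^{iβτ̄} / (1 + (k̄τ̄/2)e^{−iβτ̄}) ] equals the sign of Δ + 2τ̄Δ² − (τ̄/4)k̄². -/
lemma expI (x : ℝ) : Complex.exp (Complex.I * x) = Complex.ofReal (Real.cos x) + Complex.ofReal (Real.sin x) * Complex.I := by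
  rw [mul_comm, Complex.exp_mul_I]; norm_cast

lemma expnI (x : ℝ) : Complex.exp (-(Complex.I * x)) = Complex.ofReal (Real.cos x) - Complex.ofReal (Real.sin x) * Complex.I := by
  rw [neg_mul_eq_mul_neg, mul_comm, Complex.exp_mul_I, Complex.cos_neg, Complex.sin_neg]
  push_cast; ring

lemma sign_mul_of_pos (c y : ℝ) (hc : 0 < c) : Real.sign (c * y) = Real.sign y := by
  rcases lt_trichotomy y 0 with h | h | h
  · rw [Real.sign_of_neg h, Real.sign_of_neg (mul_neg_of_pos_of_neg hc h)]
  · simp [h]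
  · rw [Real.sign_of_pos h, Real.sign_of_pos (mul_pos hc h)]

theorem stmt_6 (Δ ω₀ k τ β : ℝ) (hΔ : 0 < Δ) (hω : 0 < ω₀) (hk : 0 < k) (hτ : 0 < τ)
    (hroot : Complex.I * (τ * β) =
      -(τ : ℂ) * (Complex.I * ω₀ + Δ) +
        (τ : ℂ) * (k / 2) * Complex.exp (-(Complex.I * (τ * β)))) :
    Real.sign
        (((k * τ / 2 : ℂ) * Complex.exp (Complex.I * (β * τ)) /
            (1 + (k * τ / 2 : ℂ) * Complex.exp (-(Complex.I * (β * τ))))).re) =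
      Real.sign (Δ + 2 * τ * Δ ^ 2 - (τ / 4) * k ^ 2) := by
  set c := Real.cos (τ * β) with hc
  set s := Real.sin (τ * β) with hs
  have hcs : c ^ 2 + s ^ 2 = 1 := by rw [hc, hs, add_comm]; exact Real.sin_sq_add_cos_sq _
  have e1 : ((τ:ℂ) * β) = ((τ * β : ℝ) : ℂ) := by push_cast; ring
  have e2 : ((β:ℂ) * τ) = ((τ * β : ℝ) : ℂ) := by push_cast; ring
  rw [e1, expnI, show ((k:ℂ)/2) = ((k/2:ℝ):ℂ) by push_cast; ring] at hroot
  rw [e2, expI, expnI]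
  -- extract real/imag parts of hroot
  have h1 : τ * (k / 2) * c = τ * Δ := by
    have := congrArg Complex.re hroot
    simp only [Complex.mul_re, Complex.add_re, Complex.sub_re, Complex.mul_im, Complex.add_im,
      Complex.sub_im, Complex.neg_re, Complex.neg_im, Complex.I_re, Complex.I_im,
      Complex.ofReal_re, Complex.ofReal_im] at this
    rw [← hc, ← hs] at this
    linarith
  have h2 : τ * (k / 2) * s = -(τ * β) - τ * ω₀ := by
    have := congrArg Complex.im hroot
    simp only [Complex.mul_re, Complex.add_re, Complex.sub_re, Complex.mul_im, Complex.add_im,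
      Complex.sub_im, Complex.neg_re, Complex.neg_im, Complex.I_re, Complex.I_im,
      Complex.ofReal_re, Complex.ofReal_im] at this
    rw [← hc, ← hs] at this
    linarith
  have hkc : k / 2 * c = Δ := by
    apply mul_left_cancel₀ (ne_of_gt hτ); linear_combination h1
  have h3 : k * τ / 2 * c = τ * Δ := by linear_combination τ * hkc
  have h4 : (k / 2 * s) ^ 2 = k ^ 2 / 4 - Δ ^ 2 := by
    rw [← hkc]; linear_combination (k ^ 2 / 4) * hcs
  -- compute the real part of the quotient
  have hre : (((k * τ / 2 : ℂ) * (↑c + ↑s * Complex.I) /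
      (1 + (k * τ / 2 : ℂ) * (↑c - ↑s * Complex.I))).re) =
      ((k * τ / 2) * c * (1 + (k * τ / 2) * c) - (k * τ / 2) * s * ((k * τ / 2) * s)) /
        ((1 + (k * τ / 2) * c) ^ 2 + ((k * τ / 2) * s) ^ 2) := by
    rw [Complex.div_re]
    simp [Complex.normSq_apply, Complex.mul_re, Complex.mul_im, Complex.add_re, Complex.add_im,
      Complex.sub_re, Complex.sub_im]
    ring
  rw [hre]
  have hD : (0:ℝ) < (1 + (k * τ / 2) * c) ^ 2 + ((k * τ / 2) * s) ^ 2 := by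
    rw [h3]
    have : (0:ℝ) < 1 + τ * Δ := by positivity
    positivity
  have hnum : (k * τ / 2) * c * (1 + (k * τ / 2) * c) - (k * τ / 2) * s * ((k * τ / 2) * s) =
      τ * (Δ + 2 * τ * Δ ^ 2 - (τ / 4) * k ^ 2) := by
    linear_combination (1 + k * τ / 2 * c + τ * Δ) * h3 - τ ^ 2 * h4
  rw [hnum, div_eq_mul_inv, mul_comm (τ * _), ← mul_assoc]
  rw [sign_mul_of_pos _ _ (by positivity)]
end

section
/- Let Δ > 0, ω₀ > 0, τ̄ > 0, k̄ > 0 and β ∈ ℝ with (k̄/2)e^{−iβτ̄} = iβ + iω₀ + Δ. Then Re l₂(0,0) < 0, where l₂(0,0) = −3k̄τ̄ / (1 + τ̄(iβ + iω₀ + Δ)). -/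
theorem stmt_8 (Δ ω₀ τ k β : ℝ) (hΔ : 0 < Δ) (hω : 0 < ω₀) (hτ : 0 < τ) (hk : 0 < k)
    (h : (k / 2 : ℂ) * Complex.exp (-(Complex.I * (β * τ))) =
      Complex.I * β + Complex.I * ω₀ + Δ) :
    ((-3 * k * τ : ℂ) / (1 + (τ : ℂ) * (Complex.I * β + Complex.I * ω₀ + Δ))).re < 0 := by
  set w : ℂ := 1 + (τ : ℂ) * (Complex.I * β + Complex.I * ω₀ + Δ) with hw
  have hre : w.re = 1 + τ * Δ := by simp [hw, Complex.add_re, Complex.mul_re]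
  have hrepos : 0 < w.re := by rw [hre]; positivity
  have hns : 0 < Complex.normSq w := by
    apply Complex.normSq_pos.2; intro h0; rw [h0] at hrepos; simp at hrepos
  rw [Complex.div_re]
  have h1 : ((-3 * k * τ : ℂ)).re = -3 * k * τ := by simp
  have h2 : ((-3 * k * τ : ℂ)).im = 0 := by simp
  rw [h1, h2]
  have : -3 * k * τ * w.re < 0 := by rw [hre]; nlinarith [mul_pos (mul_pos hk hτ) hΔ, mul_pos hk hτ]
  have : -3 * k * τ * w.re / Complex.normSq w < 0 := div_neg_of_neg_of_pos this hns
  simpa using this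
end

section
/- Let Δ > 0, ω₀ > 0, and for k > 2Δ define β₋(k) = −ω₀ − √(k²/4 − Δ²) and τ₀⁻(k) = (arcsin((−2β₋(k) − 2ω₀)/k) − 2π)/β₋(k). Then τ₀⁻(k) > 0 for all k > 2Δ, and τ₀⁻ is a continuous function of k on (2Δ, ∞). -/
theorem stmt_13 (Δ ω₀ : ℝ) (hΔ : 0 < Δ) (hω : 0 < ω₀) :
    let βm : ℝ → ℝ := fun k => -ω₀ - Real.sqrt (k ^ 2 / 4 - Δ ^ 2)
    let τ₀ : ℝ → ℝ := fun k =>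
      (Real.arcsin ((-2 * βm k - 2 * ω₀) / k) - 2 * Real.pi) / βm k
    (∀ k : ℝ, 2 * Δ < k → 0 < τ₀ k) ∧ ContinuousOn τ₀ (Set.Ioi (2 * Δ)) := by
  intro βm τ₀
  have hβ : ∀ k : ℝ, βm k < 0 := by
    intro k
    have h := Real.sqrt_nonneg (k ^ 2 / 4 - Δ ^ 2)
    simp only [βm]
    linarith
  constructor
  · intro k hk
    have hπ := Real.pi_pos
    have hle := Real.arcsin_le_pi_div_two ((-2 * βm k - 2 * ω₀) / k)
    have hnum : Real.arcsin ((-2 * βm k - 2 * ω₀) / k) - 2 * Real.pi < 0 := by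
      linarith
    exact div_pos_of_neg_of_neg hnum (hβ k)
  · have hk0 : ∀ k ∈ Set.Ioi (2 * Δ), k ≠ 0 := by
      intro k hk
      have : (0:ℝ) < k := lt_trans (by linarith) hk
      exact ne_of_gt this
    have hβcont : ContinuousOn βm (Set.Ioi (2 * Δ)) := by
      apply ContinuousOn.sub continuousOn_const
      exact (Real.continuous_sqrt.comp (by continuity)).continuousOn
    apply ContinuousOn.div
    · apply ContinuousOn.sub _ continuousOn_const
      apply Real.continuous_arcsin.comp_continuousOn
      apply ContinuousOn.div _ continuousOn_id hk0
      exact ContinuousOn.sub (continuousOn_const.mul hβcont) continuousOn_const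
    · exact hβcont
    · intro k _
      exact ne_of_lt (hβ k)
end
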